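/- For a matrix X in the symplectic group Sp(2n) (with coordinates indexed -n,...,-1,1,...,n and symplectic form ∑_{i=1}^n dx_{-i} ∧ dx_i), the minor of X with rows -n,...,-1 and columns -n,...,-3,-2,2 equals the negative of the minor with rows -n,...,-1 and columns -n,...,-3,-1,1. -/

import Mathlib

open Matrix

abbrev Idx (n : ℕ) := Fin n ⊕ Fin n

/-- The matrix of the symplectic form ∑_{i=1}^n dx_{-i} ∧ dx_i :
`Sum.inl a` encodes the index `-(a+1)`, `Sum.inr a` encodes `a+1`. -/
def symJ (n : ℕ) : Matrix (Idx n) (Idx n) ℂ :=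
  fun i j => match i, j with
  | Sum.inl a, Sum.inr b => if a = b then 1 else 0
  | Sum.inr a, Sum.inl b => if a = b then -1 else 0
  | _, _ => 0

namespace Stmt1Aux

variable (n : ℕ) (X : Matrix (Idx n) (Idx n) ℂ)

lemma lt_aux (r : Fin n) : n - 1 - r.1 < n := by have := r.2; omega

lemma one_lt_aux (hn : 2 ≤ n) : 1 < n := by omega

lemma zero_lt_aux (hn : 2 ≤ n) : 0 < n := by omega

def Rvec (j : Idx n) : Fin n → ℂ :=
  fun r => X (Sum.inl ⟨n - 1 - r.1, lt_aux n r⟩) j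

def Svec : Fin n → Fin n → ℂ :=
  fun c => Rvec n X (Sum.inl ⟨n - 1 - c.1, lt_aux n c⟩)

def Fdet (hn : 2 ≤ n) (u v : Idx n) : ℂ :=
  Matrix.detRowAlternating
    (Function.update (Function.update (Svec n X) ⟨n - 2, by omega⟩ (Rvec n X u))
      ⟨n - 1, by omega⟩ (Rvec n X v))

def Edet (hn : 2 ≤ n) (p q : Fin n) : ℂ :=
  Matrix.detRowAlternating
    (Function.update (Function.update (Svec n X) ⟨n - 2, by omega⟩
        ((Pi.single p 1 : Fin n → ℂ)))
      ⟨n - 1, by omega⟩ ((Pi.single q 1 : Fin n → ℂ)))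

lemma Rvec_eq_sum (j : Idx n) :
    Rvec n X j = ∑ p : Fin n,
      X (Sum.inl ⟨n - 1 - p.1, lt_aux n p⟩) j • (Pi.single p 1 : Fin n → ℂ) := by
  funext r
  simp [Rvec, Pi.single_apply, Finset.sum_ite_eq', eq_comm]

set_option maxHeartbeats 1000000 in
lemma Fdet_expand (hn : 2 ≤ n) (u v : Idx n) :
    Fdet n X hn u v = ∑ q : Fin n, X (Sum.inl ⟨n - 1 - q.1, lt_aux n q⟩) v *
      ∑ p : Fin n, X (Sum.inl ⟨n - 1 - p.1, lt_aux n p⟩) u * Edet n X hn p q := by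
  have hne : (⟨n - 2, by omega⟩ : Fin n) ≠ ⟨n - 1, by omega⟩ :=
    Fin.ne_of_val_ne (by show n - 2 ≠ n - 1; omega)
  rw [Fdet, Rvec_eq_sum n X v, AlternatingMap.map_update_sum]
  refine Finset.sum_congr rfl fun q _ => ?_
  rw [AlternatingMap.map_update_smul, smul_eq_mul]
  congr 1
  rw [Function.update_comm hne, Rvec_eq_sum n X u, AlternatingMap.map_update_sum]
  refine Finset.sum_congr rfl fun p _ => ?_
  rw [AlternatingMap.map_update_smul, smul_eq_mul]
  congr 1
  rw [Function.update_comm hne.symm]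
  rfl

lemma Edet_antisymm (hn : 2 ≤ n) (p q : Fin n) :
    Edet n X hn p q = - Edet n X hn q p := by
  have hne : (⟨n - 2, by omega⟩ : Fin n) ≠ ⟨n - 1, by omega⟩ :=
    Fin.ne_of_val_ne (by show n - 2 ≠ n - 1; omega)
  have hfam : (Function.update (Function.update (Svec n X) ⟨n - 2, by omega⟩
        ((Pi.single q 1 : Fin n → ℂ))) ⟨n - 1, by omega⟩ ((Pi.single p 1 : Fin n → ℂ)))
        ∘ (Equiv.swap (⟨n - 2, by omega⟩ : Fin n) ⟨n - 1, by omega⟩)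
      = Function.update (Function.update (Svec n X) ⟨n - 2, by omega⟩
        ((Pi.single p 1 : Fin n → ℂ))) ⟨n - 1, by omega⟩ ((Pi.single q 1 : Fin n → ℂ)) := by
    funext i
    by_cases h1 : i = (⟨n - 2, by omega⟩ : Fin n)
    · subst h1
      rw [Function.comp_apply, Equiv.swap_apply_left, Function.update_self,
        Function.update_of_ne hne, Function.update_self]
    · by_cases h2 : i = (⟨n - 1, by omega⟩ : Fin n)
      · subst h2
        rw [Function.comp_apply, Equiv.swap_apply_right, Function.update_of_ne hne,
          Function.update_self, Function.update_self]
      · rw [Function.comp_apply, Equiv.swap_apply_of_ne_of_ne h1 h2,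
          Function.update_of_ne h2, Function.update_of_ne h1,
          Function.update_of_ne h2, Function.update_of_ne h1]
  calc Edet n X hn p q
      = Matrix.detRowAlternating ((Function.update (Function.update (Svec n X)
          ⟨n - 2, by omega⟩ ((Pi.single q 1 : Fin n → ℂ))) ⟨n - 1, by omega⟩
          ((Pi.single p 1 : Fin n → ℂ))) ∘ (Equiv.swap (⟨n - 2, by omega⟩ : Fin n)
          ⟨n - 1, by omega⟩)) := by rw [hfam]; rfl
    _ = - Matrix.detRowAlternating (Function.update (Function.update (Svec n X)
          ⟨n - 2, by omega⟩ ((Pi.single q 1 : Fin n → ℂ))) ⟨n - 1, by omega⟩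
          ((Pi.single p 1 : Fin n → ℂ))) :=
        AlternatingMap.map_swap (Matrix.detRowAlternating (n := Fin n) (R := ℂ)) _ hne
    _ = - Edet n X hn q p := rfl

set_option maxHeartbeats 1000000 in
lemma Fdet_eq_zero (hn : 2 ≤ n) (k : Fin n) (hk : 2 ≤ k.1) :
    Fdet n X hn (Sum.inl k) (Sum.inr k) = 0 := by
  have hkn := k.2
  set pen : Fin n := ⟨n - 2, by omega⟩ with hpen
  set lst : Fin n := ⟨n - 1, by omega⟩ with hlst
  set j : Fin n := ⟨n - 1 - k.1, by omega⟩ with hj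
  set W := Function.update (Function.update (Svec n X) pen (Rvec n X (Sum.inl k))) lst
    (Rvec n X (Sum.inr k)) with hW
  have hne1 : pen ≠ j := Fin.ne_of_val_ne (by simp [hpen, hj]; omega)
  have hne2 : pen ≠ lst := Fin.ne_of_val_ne (by simp [hpen, hlst]; omega)
  have hne3 : j ≠ lst := Fin.ne_of_val_ne (by simp [hj, hlst]; omega)
  have hval : W pen = W j := by
    rw [hW]
    rw [Function.update_apply, if_neg hne2, Function.update_apply, if_pos rfl]
    rw [Function.update_apply, if_neg hne3, Function.update_apply, if_neg hne1.symm]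
    simp only [Svec]
    have hidx : (Sum.inl (⟨n - 1 - (n - 1 - k.1), by omega⟩ : Fin n) : Idx n) = Sum.inl k := by
      congr 1
      exact Fin.ext (show n - 1 - (n - 1 - k.1) = k.1 by omega)
    exact (congrArg (Rvec n X) hidx).symm
  exact Matrix.detRowAlternating.map_eq_zero_of_eq W hval hne1


lemma total (hn : 2 ≤ n)
    (hsym : ∀ a b : Fin n,
      ∑ k : Fin n, X (Sum.inl a) (Sum.inl k) * X (Sum.inl b) (Sum.inr k)
        = ∑ k : Fin n, X (Sum.inl b) (Sum.inl k) * X (Sum.inl a) (Sum.inr k)) :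
    ∑ k : Fin n, Fdet n X hn (Sum.inl k) (Sum.inr k) = 0 := by
  set M : Fin n → Fin n → ℂ := fun p q =>
    ∑ k : Fin n, X (Sum.inl ⟨n - 1 - p.1, lt_aux n p⟩) (Sum.inl k) *
      X (Sum.inl ⟨n - 1 - q.1, lt_aux n q⟩) (Sum.inr k) with hM
  have hMsym : ∀ p q, M p q = M q p := fun p q => hsym _ _
  have hexp : ∑ k : Fin n, Fdet n X hn (Sum.inl k) (Sum.inr k)
      = ∑ q : Fin n, ∑ p : Fin n, Edet n X hn p q * M p q := by
    calc ∑ k : Fin n, Fdet n X hn (Sum.inl k) (Sum.inr k)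
        = ∑ k : Fin n, ∑ q : Fin n,
            X (Sum.inl ⟨n - 1 - q.1, lt_aux n q⟩) (Sum.inr k) *
            ∑ p : Fin n, X (Sum.inl ⟨n - 1 - p.1, lt_aux n p⟩) (Sum.inl k) *
              Edet n X hn p q :=
          Finset.sum_congr rfl fun k _ => Fdet_expand n X hn (Sum.inl k) (Sum.inr k)
      _ = ∑ q : Fin n, ∑ k : Fin n,
            X (Sum.inl ⟨n - 1 - q.1, lt_aux n q⟩) (Sum.inr k) *
            ∑ p : Fin n, X (Sum.inl ⟨n - 1 - p.1, lt_aux n p⟩) (Sum.inl k) *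
              Edet n X hn p q := Finset.sum_comm
      _ = ∑ q : Fin n, ∑ p : Fin n, Edet n X hn p q * M p q := by
          refine Finset.sum_congr rfl fun q _ => ?_
          simp_rw [Finset.mul_sum]
          rw [Finset.sum_comm]
          refine Finset.sum_congr rfl fun p _ => ?_
          rw [hM, Finset.mul_sum]
          exact Finset.sum_congr rfl fun k _ => by ring
  have hself : (∑ q : Fin n, ∑ p : Fin n, Edet n X hn p q * M p q)
      = - ∑ q : Fin n, ∑ p : Fin n, Edet n X hn p q * M p q := by
    calc ∑ q : Fin n, ∑ p : Fin n, Edet n X hn p q * M p q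
        = ∑ q : Fin n, ∑ p : Fin n, -(Edet n X hn q p * M q p) := by
          refine Finset.sum_congr rfl fun q _ => Finset.sum_congr rfl fun p _ => ?_
          rw [Edet_antisymm n X hn p q, hMsym p q]; ring
      _ = - ∑ q : Fin n, ∑ p : Fin n, Edet n X hn q p * M q p := by
          simp [Finset.sum_neg_distrib]
      _ = - ∑ q : Fin n, ∑ p : Fin n, Edet n X hn p q * M p q := by rw [Finset.sum_comm]
  rw [hexp]
  exact add_self_eq_zero.mp (by linear_combination hself)

set_option maxHeartbeats 1000000 in
lemma det1_eq (hn : 2 ≤ n) :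
    (X.submatrix
        (fun r : Fin n => (Sum.inl ⟨n - 1 - r.1, lt_aux n r⟩ : Idx n))
        (fun c : Fin n =>
          if c.1 < n - 1 then (Sum.inl ⟨n - 1 - c.1, lt_aux n c⟩ : Idx n)
          else Sum.inr ⟨1, one_lt_aux n hn⟩)).det
      = Fdet n X hn (Sum.inl ⟨1, one_lt_aux n hn⟩) (Sum.inr ⟨1, one_lt_aux n hn⟩) := by
  rw [← Matrix.det_transpose]
  have he : (X.submatrix
        (fun r : Fin n => (Sum.inl ⟨n - 1 - r.1, lt_aux n r⟩ : Idx n))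
        (fun c : Fin n =>
          if c.1 < n - 1 then (Sum.inl ⟨n - 1 - c.1, lt_aux n c⟩ : Idx n)
          else Sum.inr ⟨1, one_lt_aux n hn⟩))ᵀ
      = Matrix.of (Function.update (Function.update (Svec n X) ⟨n - 2, by omega⟩
          (Rvec n X (Sum.inl ⟨1, one_lt_aux n hn⟩))) ⟨n - 1, by omega⟩
          (Rvec n X (Sum.inr ⟨1, one_lt_aux n hn⟩))) := by
    ext c r
    obtain ⟨cv, hcv⟩ := c
    simp only [Matrix.transpose_apply, Matrix.submatrix_apply, Matrix.of_apply,
      Function.update_apply, Svec, Rvec, Fin.mk.injEq]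
    split_ifs <;>
      first
        | rfl
        | (exfalso; omega)
        | (exact congrArg (X _) (congrArg Sum.inl (Fin.ext (by simp; omega))))
        | (exact congrArg (X _) (congrArg Sum.inr (Fin.ext (by simp; omega))))
  rw [he]
  rfl

set_option maxHeartbeats 1000000 in
lemma det2_eq (hn : 2 ≤ n) :
    (X.submatrix
        (fun r : Fin n => (Sum.inl ⟨n - 1 - r.1, lt_aux n r⟩ : Idx n))
        (fun c : Fin n =>
          if c.1 < n - 2 then (Sum.inl ⟨n - 1 - c.1, lt_aux n c⟩ : Idx n)
          else if c.1 = n - 2 then Sum.inl ⟨0, zero_lt_aux n hn⟩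
          else Sum.inr ⟨0, zero_lt_aux n hn⟩)).det
      = Fdet n X hn (Sum.inl ⟨0, zero_lt_aux n hn⟩) (Sum.inr ⟨0, zero_lt_aux n hn⟩) := by
  rw [← Matrix.det_transpose]
  have he : (X.submatrix
        (fun r : Fin n => (Sum.inl ⟨n - 1 - r.1, lt_aux n r⟩ : Idx n))
        (fun c : Fin n =>
          if c.1 < n - 2 then (Sum.inl ⟨n - 1 - c.1, lt_aux n c⟩ : Idx n)
          else if c.1 = n - 2 then Sum.inl ⟨0, zero_lt_aux n hn⟩
          else Sum.inr ⟨0, zero_lt_aux n hn⟩))ᵀ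
      = Matrix.of (Function.update (Function.update (Svec n X) ⟨n - 2, by omega⟩
          (Rvec n X (Sum.inl ⟨0, zero_lt_aux n hn⟩))) ⟨n - 1, by omega⟩
          (Rvec n X (Sum.inr ⟨0, zero_lt_aux n hn⟩))) := by
    ext c r
    obtain ⟨cv, hcv⟩ := c
    simp only [Matrix.transpose_apply, Matrix.submatrix_apply, Matrix.of_apply,
      Function.update_apply, Svec, Rvec, Fin.mk.injEq]
    split_ifs <;>
      first
        | rfl
        | (exfalso; omega)
        | (exact congrArg (X _) (congrArg Sum.inl (Fin.ext (by simp; omega))))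
        | (exact congrArg (X _) (congrArg Sum.inr (Fin.ext (by simp; omega))))
  rw [he]
  rfl

lemma symJ_mul_self : symJ n * symJ n = -1 := by
  ext i j
  cases i <;> cases j <;>
    simp [Matrix.mul_apply, symJ, Fintype.sum_sum_type, Matrix.one_apply, Finset.sum_ite_eq,
      eq_comm, apply_ite]

lemma sp_row (hX : Xᵀ * symJ n * X = symJ n) : X * symJ n * Xᵀ = symJ n := by
  have h1 : ((-(symJ n)) * Xᵀ * symJ n) * X = 1 := by
    calc ((-(symJ n)) * Xᵀ * symJ n) * X = (-(symJ n)) * (Xᵀ * symJ n * X) := by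
          noncomm_ring
      _ = 1 := by rw [hX, neg_mul, symJ_mul_self, neg_neg]
  have h2 : X * ((-(symJ n)) * Xᵀ * symJ n) = 1 := mul_eq_one_comm.2 h1
  have h3 : X * (-(symJ n)) * Xᵀ * (symJ n * (-(symJ n))) = -(symJ n) := by
    calc X * (-(symJ n)) * Xᵀ * (symJ n * (-(symJ n)))
        = (X * ((-(symJ n)) * Xᵀ * symJ n)) * (-(symJ n)) := by noncomm_ring
      _ = -(symJ n) := by rw [h2, one_mul]
  rw [show symJ n * (-(symJ n)) = 1 by rw [mul_neg, symJ_mul_self, neg_neg], mul_one] at h3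
  have h4 := congrArg Neg.neg h3
  simpa [mul_neg, neg_mul] using h4

lemma sym_of_sp (hsp : X * symJ n * Xᵀ = symJ n) (a b : Fin n) :
    ∑ k, X (Sum.inl a) (Sum.inl k) * X (Sum.inl b) (Sum.inr k)
      = ∑ k, X (Sum.inl b) (Sum.inl k) * X (Sum.inl a) (Sum.inr k) := by
  have h : (X * symJ n * Xᵀ) (Sum.inl a) (Sum.inl b) = symJ n (Sum.inl a) (Sum.inl b) := by
    rw [hsp]
  simp only [Matrix.mul_apply, Matrix.transpose_apply, Fintype.sum_sum_type, symJ] at h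
  simp [Finset.sum_ite_eq, Finset.mul_sum, Finset.sum_mul, mul_ite, ite_mul,
    mul_comm, sub_eq_zero] at h
  linear_combination h

end Stmt1Aux

/-- For `X ∈ Sp(2n)`, the minor with rows `-n,...,-1` and columns `-n,...,-3,-2,2`
equals the negative of the minor with rows `-n,...,-1` and columns `-n,...,-3,-1,1`. -/
theorem stmt1 (n : ℕ) (hn : 2 ≤ n) (X : Matrix (Idx n) (Idx n) ℂ)
    (hX : Xᵀ * symJ n * X = symJ n) :
    (X.submatrix
        (fun r : Fin n => (Sum.inl ⟨n - 1 - r.1, by have := r.2; omega⟩ : Idx n))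
        (fun c : Fin n =>
          if c.1 < n - 1 then (Sum.inl ⟨n - 1 - c.1, by have := c.2; omega⟩ : Idx n)
          else Sum.inr ⟨1, by omega⟩)).det
    = - (X.submatrix
        (fun r : Fin n => (Sum.inl ⟨n - 1 - r.1, by have := r.2; omega⟩ : Idx n))
        (fun c : Fin n =>
          if c.1 < n - 2 then (Sum.inl ⟨n - 1 - c.1, by have := c.2; omega⟩ : Idx n)
          else if c.1 = n - 2 then Sum.inl ⟨0, by omega⟩
          else Sum.inr ⟨0, by omega⟩)).det := by
  have hsp := Stmt1Aux.sp_row n X hX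
  have htot := Stmt1Aux.total n X hn (Stmt1Aux.sym_of_sp n X hsp)
  have h01 : ∑ k : Fin n, Stmt1Aux.Fdet n X hn (Sum.inl k) (Sum.inr k)
      = Stmt1Aux.Fdet n X hn (Sum.inl ⟨0, by omega⟩) (Sum.inr ⟨0, by omega⟩)
        + Stmt1Aux.Fdet n X hn (Sum.inl ⟨1, by omega⟩) (Sum.inr ⟨1, by omega⟩) := by
    rw [← Finset.sum_subset
        (Finset.subset_univ ({⟨0, by omega⟩, ⟨1, by omega⟩} : Finset (Fin n)))
        (fun k _ hk => ?_)]
    · exact Finset.sum_pair (Fin.ne_of_val_ne (by norm_num))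
    · obtain ⟨kv, hkv⟩ := k
      simp only [Finset.mem_insert, Finset.mem_singleton, Fin.mk.injEq] at hk
      push_neg at hk
      exact Stmt1Aux.Fdet_eq_zero n X hn ⟨kv, hkv⟩ (show 2 ≤ kv by omega)
  rw [Stmt1Aux.det1_eq n X hn, Stmt1Aux.det2_eq n X hn]
  have hz : Stmt1Aux.Fdet n X hn (Sum.inl ⟨0, by omega⟩) (Sum.inr ⟨0, by omega⟩)
      + Stmt1Aux.Fdet n X hn (Sum.inl ⟨1, by omega⟩) (Sum.inr ⟨1, by omega⟩) = 0 := by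
    rw [← h01]; exact htot
  linear_combination hz
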